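/- arXiv:1011.2747 — 2 statements merged into one kernel-verified Lean document; each statement's English description precedes it below -/
import Mathlib

section
/- Let c ∈ ℝ and set p = s(1−p_A) + (1−p_J) k r. For all bounded functions u₁, u₂ : ℝ → [0,∞), the sup-norm estimate sup_{x∈ℝ} |B_c[u₁](x) − B_c[u₂](x)| ≤ p · sup_{x∈ℝ} |u₁(x) − u₂(x)| holds; in particular, under condition (b2) the operator B_c is a strict contraction in the sup norm on bounded nonnegative functions. -/
open MeasureTheory Filter Topology

theorem stmt8
    (r M k s : ℝ) (hr : 1 < r) (hM : 0 < M) (hk : 0 < k) (hs : 0 ≤ s) (hsk : s + k = 1)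
    (F : ℝ → ℝ) (hF : ∀ u : ℝ, F u = k * r * M * u / (M + (r - 1) * u))
    (pA pJ : ℝ) (hpA : pA ∈ Set.Icc (0:ℝ) 1) (hpJ : pJ ∈ Set.Icc (0:ℝ) 1)
    (c : ℝ)
    (Bc : (ℝ → ℝ) → ℝ → ℝ)
    (hBc : ∀ (u : ℝ → ℝ) (x : ℝ), Bc u x =
      s * (1 - pA) * u (x + c) + (1 - pJ) * F (u (x + c)))
    (p : ℝ) (hp : p = s * (1 - pA) + (1 - pJ) * k * r)
    (u₁ u₂ : ℝ → ℝ)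
    (h₁nn : ∀ x, 0 ≤ u₁ x) (h₂nn : ∀ x, 0 ≤ u₂ x)
    (h₁b : ∃ C : ℝ, ∀ x, u₁ x ≤ C) (h₂b : ∃ C : ℝ, ∀ x, u₂ x ≤ C) :
    ∀ C : ℝ, (∀ x, |u₁ x - u₂ x| ≤ C) → ∀ x, |Bc u₁ x - Bc u₂ x| ≤ p * C := by
  have key : ∀ a b : ℝ, 0 ≤ a → 0 ≤ b → |F a - F b| ≤ k * r * |a - b| := by
    intro a b ha hb
    have hDa : 0 < M + (r - 1) * a := by nlinarith
    have hDb : 0 < M + (r - 1) * b := by nlinarith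
    rw [hF, hF, div_sub_div _ _ (ne_of_gt hDa) (ne_of_gt hDb), abs_div,
      abs_of_pos (mul_pos hDa hDb), div_le_iff₀ (mul_pos hDa hDb)]
    have heq : k * r * M * a * (M + (r - 1) * b) - (M + (r - 1) * a) * (k * r * M * b)
        = (k * r * M ^ 2) * (a - b) := by ring
    rw [heq, abs_mul, abs_of_nonneg (by positivity : (0:ℝ) ≤ k * r * M ^ 2)]
    have habs : 0 ≤ |a - b| := abs_nonneg _
    have hM2 : M ^ 2 ≤ (M + (r - 1) * a) * (M + (r - 1) * b) := by
      have hr1 : (0:ℝ) ≤ r - 1 := by linarith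
      nlinarith [mul_nonneg (mul_nonneg hr1 hr1) (mul_nonneg ha hb),
        mul_nonneg (mul_nonneg hM.le hr1) ha, mul_nonneg (mul_nonneg hM.le hr1) hb]
    have hcoef : 0 ≤ k * r * |a - b| := by positivity
    nlinarith [mul_le_mul_of_nonneg_left hM2 hcoef]
  intro C hC x
  have hpA1 : 0 ≤ 1 - pA := by linarith [hpA.2]
  have hpJ1 : 0 ≤ 1 - pJ := by linarith [hpJ.2]
  have hd := hC (x + c)
  have hd0 : 0 ≤ |u₁ (x + c) - u₂ (x + c)| := abs_nonneg _
  have hFle := key (u₁ (x + c)) (u₂ (x + c)) (h₁nn _) (h₂nn _)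
  rw [hBc, hBc]
  have h1 : s * (1 - pA) * u₁ (x + c) + (1 - pJ) * F (u₁ (x + c)) -
      (s * (1 - pA) * u₂ (x + c) + (1 - pJ) * F (u₂ (x + c)))
      = s * (1 - pA) * (u₁ (x + c) - u₂ (x + c)) +
        (1 - pJ) * (F (u₁ (x + c)) - F (u₂ (x + c))) := by ring
  rw [h1]
  calc |s * (1 - pA) * (u₁ (x + c) - u₂ (x + c)) +
        (1 - pJ) * (F (u₁ (x + c)) - F (u₂ (x + c)))|
      ≤ |s * (1 - pA) * (u₁ (x + c) - u₂ (x + c))| +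
        |(1 - pJ) * (F (u₁ (x + c)) - F (u₂ (x + c)))| := abs_add_le _ _
    _ = s * (1 - pA) * |u₁ (x + c) - u₂ (x + c)| +
        (1 - pJ) * |F (u₁ (x + c)) - F (u₂ (x + c))| := by
        rw [abs_mul, abs_mul, abs_mul, abs_of_nonneg hs, abs_of_nonneg hpA1, abs_of_nonneg hpJ1]
    _ ≤ p * C := by
        have h2 : (1 - pJ) * |F (u₁ (x + c)) - F (u₂ (x + c))| ≤
            (1 - pJ) * (k * r * |u₁ (x + c) - u₂ (x + c)|) :=
          mul_le_mul_of_nonneg_left hFle hpJ1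
        have hkr : 0 ≤ (1 - pJ) * (k * r) :=
          mul_nonneg hpJ1 (mul_nonneg hk.le (by linarith))
        nlinarith [mul_le_mul_of_nonneg_left hd (mul_nonneg hs hpA1),
          mul_le_mul_of_nonneg_left hd hkr]
end

section
/- Assume condition (b2): s(1−p_A) + (1−p_J) k r < 1, and let c ∈ ℝ. Then for every bounded measurable function w : ℝ → [0,∞) there exists a unique bounded measurable function u : ℝ → [0,∞) such that u(x) − B_c[u](x) = w(x) for all x ∈ ℝ; moreover, if w is continuous then this unique solution u is continuous. -/
open MeasureTheory Filter Topology

theorem stmt9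
    (r M k s : ℝ) (hr : 1 < r) (hM : 0 < M) (hk : 0 < k) (hs : 0 ≤ s) (hsk : s + k = 1)
    (F : ℝ → ℝ) (hF : ∀ u : ℝ, F u = k * r * M * u / (M + (r - 1) * u))
    (pA pJ : ℝ) (hpA : pA ∈ Set.Icc (0:ℝ) 1) (hpJ : pJ ∈ Set.Icc (0:ℝ) 1)
    (c : ℝ)
    (Bc : (ℝ → ℝ) → ℝ → ℝ)
    (hBc : ∀ (u : ℝ → ℝ) (x : ℝ), Bc u x =
      s * (1 - pA) * u (x + c) + (1 - pJ) * F (u (x + c)))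
    (hb2 : s * (1 - pA) + (1 - pJ) * k * r < 1)
    (w : ℝ → ℝ) (hwm : Measurable w) (hwnn : ∀ x, 0 ≤ w x) (hwb : ∃ C : ℝ, ∀ x, w x ≤ C) :
    ∃ u : ℝ → ℝ,
      (Measurable u ∧ (∀ x, 0 ≤ u x) ∧ (∃ C : ℝ, ∀ x, u x ≤ C) ∧
        ∀ x, u x - Bc u x = w x) ∧
      (∀ v : ℝ → ℝ,
        (Measurable v ∧ (∀ x, 0 ≤ v x) ∧ (∃ C : ℝ, ∀ x, v x ≤ C) ∧
          ∀ x, v x - Bc v x = w x) → v = u) ∧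
      (Continuous w → Continuous u) := by
  obtain ⟨C, hC⟩ := hwb
  have hC0 : 0 ≤ C := le_trans (hwnn 0) (hC 0)
  set L : ℝ := s * (1 - pA) + (1 - pJ) * k * r with hLdef
  have hpA1 : pA ≤ 1 := hpA.2
  have hpJ1 : pJ ≤ 1 := hpJ.2
  have hkr : 0 < k * r := mul_pos hk (by linarith)
  have hL0 : 0 ≤ L := by
    have h1 : 0 ≤ s * (1 - pA) := mul_nonneg hs (by linarith)
    have h2 : 0 ≤ (1 - pJ) * k * r := by
      have : 0 ≤ (1 - pJ) := by linarith
      positivity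
    linarith
  have hL1 : L < 1 := hb2
  -- denominator positivity
  have hden : ∀ t : ℝ, 0 ≤ t → 0 < M + (r - 1) * t := by
    intro t ht
    have : 0 ≤ (r - 1) * t := mul_nonneg (by linarith) ht
    linarith
  -- Lipschitz bound for F on nonnegatives
  have hFlip : ∀ a b : ℝ, 0 ≤ a → 0 ≤ b → |F a - F b| ≤ k * r * |a - b| := by
    intro a b ha hb
    have hDa := hden a ha
    have hDb := hden b hb
    have key : F a - F b =
        k * r * M * M * (a - b) / ((M + (r - 1) * a) * (M + (r - 1) * b)) := by
      rw [hF, hF]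
      rw [div_sub_div _ _ hDa.ne' hDb.ne', div_eq_div_iff (mul_ne_zero hDa.ne' hDb.ne') (mul_ne_zero hDa.ne' hDb.ne')]
      ring
    rw [key, abs_div, abs_of_pos (mul_pos hDa hDb)]
    rw [div_le_iff₀ (mul_pos hDa hDb)]
    have habs : |k * r * M * M * (a - b)| = k * r * M * M * |a - b| := by
      rw [abs_mul, abs_of_nonneg (by positivity : (0:ℝ) ≤ k * r * M * M)]
    rw [habs]
    have hMM : M * M ≤ (M + (r - 1) * a) * (M + (r - 1) * b) := by
      have h1 : 0 ≤ (r - 1) * a := mul_nonneg (by linarith) ha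
      have h2 : 0 ≤ (r - 1) * b := mul_nonneg (by linarith) hb
      nlinarith
    nlinarith [abs_nonneg (a - b), mul_nonneg (mul_nonneg hk.le (by linarith : (0:ℝ) ≤ r)) (abs_nonneg (a - b))]
  -- the scalar map g
  set g : ℝ → ℝ := fun t => s * (1 - pA) * t + (1 - pJ) * F t with hgdef
  have hg0 : g 0 = 0 := by simp [hgdef, hF]
  have hglip : ∀ a b : ℝ, 0 ≤ a → 0 ≤ b → |g a - g b| ≤ L * |a - b| := by
    intro a b ha hb
    have h1 : g a - g b = s * (1 - pA) * (a - b) + (1 - pJ) * (F a - F b) := by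
      simp only [hgdef]; ring
    rw [h1]
    calc |s * (1 - pA) * (a - b) + (1 - pJ) * (F a - F b)|
        ≤ |s * (1 - pA) * (a - b)| + |(1 - pJ) * (F a - F b)| := abs_add_le _ _
      _ = s * (1 - pA) * |a - b| + (1 - pJ) * |F a - F b| := by
          rw [abs_mul (s * (1 - pA)) (a - b), abs_mul (1 - pJ) (F a - F b),
            abs_of_nonneg (mul_nonneg hs (by linarith : (0:ℝ) ≤ 1 - pA)),
            abs_of_nonneg (by linarith : (0:ℝ) ≤ 1 - pJ)]
      _ ≤ s * (1 - pA) * |a - b| + (1 - pJ) * (k * r * |a - b|) := by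
          have := hFlip a b ha hb
          have h2 : (0:ℝ) ≤ 1 - pJ := by linarith
          nlinarith
      _ = L * |a - b| := by rw [hLdef]; ring
  have hgnn : ∀ t : ℝ, 0 ≤ t → 0 ≤ g t := by
    intro t ht
    show 0 ≤ s * (1 - pA) * t + (1 - pJ) * F t
    have hD := hden t ht
    have hFnn : 0 ≤ F t := by
      rw [hF]; positivity
    have : 0 ≤ s * (1 - pA) * t := by
      have : (0:ℝ) ≤ 1 - pA := by linarith
      positivity
    have h2 : (0:ℝ) ≤ 1 - pJ := by linarith
    nlinarith
  have hgle : ∀ t : ℝ, 0 ≤ t → g t ≤ L * t := by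
    intro t ht
    have := hglip t 0 ht le_rfl
    rw [hg0] at this
    simp only [sub_zero] at this
    rw [abs_of_nonneg ht] at this
    calc g t ≤ |g t| := le_abs_self _
      _ ≤ L * t := this
  -- the iterates
  set seq : ℕ → ℝ → ℝ :=
    fun n => Nat.rec (fun _ => (0:ℝ)) (fun _ prev x => g (prev (x + c)) + w x) n with hseq
  have hseq0 : ∀ x, seq 0 x = 0 := fun _ => rfl
  have hseqS : ∀ n x, seq (n + 1) x = g (seq n (x + c)) + w x := fun _ _ => rfl
  -- nonnegativity of iterates
  have hseqnn : ∀ n x, 0 ≤ seq n x := by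
    intro n
    induction n with
    | zero => intro x; simp [hseq0]
    | succ n ih =>
      intro x
      rw [hseqS]
      have := hgnn _ (ih (x + c))
      linarith [hwnn x]
  -- bound on iterates
  set K : ℝ := C / (1 - L) with hKdef
  have hK0 : 0 ≤ K := div_nonneg hC0 (by linarith)
  have hKeq : L * K + C = K := by
    have h : (1:ℝ) - L ≠ 0 := by linarith
    have h2 : K * (1 - L) = C := by rw [hKdef, div_mul_cancel₀ _ h]
    nlinarith
  have hseqb : ∀ n x, seq n x ≤ K := by
    intro n
    induction n with
    | zero => intro x; simp [hseq0, hK0]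
    | succ n ih =>
      intro x
      rw [hseqS]
      have h1 := hgle _ (hseqnn n (x + c))
      have h2 : L * seq n (x + c) ≤ L * K := mul_le_mul_of_nonneg_left (ih (x + c)) hL0
      have := hC x
      linarith
  -- measurability of iterates
  have hseqm : ∀ n, Measurable (seq n) := by
    intro n
    induction n with
    | zero => exact measurable_const
    | succ n ih =>
      have hshift : Measurable (fun x => seq n (x + c)) := ih.comp (measurable_add_const c)
      have : (fun x => seq (n + 1) x) = fun x =>
          s * (1 - pA) * seq n (x + c) +
            (1 - pJ) * (k * r * M * seq n (x + c) / (M + (r - 1) * seq n (x + c))) + w x := by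
        funext x
        rw [hseqS, hgdef]
        simp only [hF]
      rw [show seq (n + 1) = fun x => seq (n + 1) x from rfl, this]
      apply Measurable.add _ hwm
      apply Measurable.add
      · exact (measurable_const.mul hshift)
      · exact measurable_const.mul ((measurable_const.mul hshift).div
          (measurable_const.add (measurable_const.mul hshift)))
  -- geometric Cauchy estimate
  have hstep : ∀ n, ∀ x, |seq (n + 1) x - seq n x| ≤ C * L ^ n := by
    intro n
    induction n with
    | zero =>
      intro x
      rw [hseqS, hseq0, hseq0, hg0]
      simp only [pow_zero, mul_one, zero_add, sub_zero]
      rw [abs_of_nonneg (hwnn x)]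
      exact hC x
    | succ n ih =>
      intro x
      simp only [hseqS]
      have h1 : g (seq (n + 1) (x + c)) + w x - (g (seq n (x + c)) + w x)
          = g (seq (n + 1) (x + c)) - g (seq n (x + c)) := by ring
      rw [h1]
      calc |g (seq (n + 1) (x + c)) - g (seq n (x + c))|
          ≤ L * |seq (n + 1) (x + c) - seq n (x + c)| :=
            hglip _ _ (hseqnn (n + 1) (x + c)) (hseqnn n (x + c))
        _ ≤ L * (C * L ^ n) := mul_le_mul_of_nonneg_left (ih (x + c)) hL0
        _ = C * L ^ (n + 1) := by ring
  have hdiststep : ∀ x, ∀ n, dist (seq n x) (seq (n + 1) x) ≤ C * L ^ n := by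
    intro x n
    rw [Real.dist_eq, abs_sub_comm]
    exact hstep n x
  have hcau : ∀ x, CauchySeq (fun n => seq n x) :=
    fun x => cauchySeq_of_le_geometric L C hL1 (hdiststep x)
  have hlim : ∀ x, ∃ a : ℝ, Tendsto (fun n => seq n x) atTop (𝓝 a) :=
    fun x => cauchySeq_tendsto_of_complete (hcau x)
  choose u hu using hlim
  -- distance to the limit
  have hudist : ∀ n x, dist (seq n x) (u x) ≤ C * L ^ n / (1 - L) := by
    intro n x
    exact dist_le_of_le_geometric_of_tendsto L C hL1 (hdiststep x) (hu x) n
  -- measurability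
  have hum : Measurable u := by
    apply measurable_of_tendsto_metrizable' atTop hseqm
    rw [tendsto_pi_nhds]
    exact hu
  -- nonnegativity
  have hunn : ∀ x, 0 ≤ u x := by
    intro x
    exact ge_of_tendsto' (hu x) (fun n => hseqnn n x)
  -- bound
  have hub : ∀ x, u x ≤ K := by
    intro x
    exact le_of_tendsto' (hu x) (fun n => hseqb n x)
  -- fixed point equation
  have hufix : ∀ x, u x = g (u (x + c)) + w x := by
    intro x
    have h1 : Tendsto (fun n => seq (n + 1) x) atTop (𝓝 (u x)) :=
      (hu x).comp (tendsto_add_atTop_nat 1)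
    have h2 : Tendsto (fun n => g (seq n (x + c)) + w x) atTop (𝓝 (g (u (x + c)) + w x)) := by
      apply Tendsto.add _ tendsto_const_nhds
      rw [tendsto_iff_dist_tendsto_zero]
      apply squeeze_zero (fun n => dist_nonneg)
        (g := fun n => L * dist (seq n (x + c)) (u (x + c)))
      · intro n
        rw [Real.dist_eq, Real.dist_eq]
        exact hglip _ _ (hseqnn _ _) (hunn _)
      · have : Tendsto (fun n => dist (seq n (x + c)) (u (x + c))) atTop (𝓝 0) :=
          (tendsto_iff_dist_tendsto_zero).mp (hu (x + c))
        simpa using this.const_mul L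
    have h3 : (fun n => seq (n + 1) x) = fun n => g (seq n (x + c)) + w x := by
      funext n; exact hseqS n x
    rw [h3] at h1
    exact tendsto_nhds_unique h1 h2
  have huBc : ∀ x, u x - Bc u x = w x := by
    intro x
    rw [hBc]
    have := hufix x
    rw [hgdef] at this
    simp only at this
    linarith
  refine ⟨u, ⟨hum, hunn, ⟨K, hub⟩, huBc⟩, ?_, ?_⟩
  · -- uniqueness
    rintro v ⟨hvm, hvnn, ⟨Cv, hvb⟩, hveq⟩
    have hvfix : ∀ x, v x = g (v (x + c)) + w x := by
      intro x
      have := hveq x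
      rw [hBc] at this
      rw [hgdef]
      simp only
      linarith
    have hD : ∀ x, |v x - u x| ≤ Cv + K := by
      intro x
      have h1 := hvnn x
      have h2 := hvb x
      have h3 := hunn x
      have h4 := hub x
      rw [abs_le]
      constructor <;> linarith
    have hiter : ∀ n, ∀ x, |v x - u x| ≤ L ^ n * (Cv + K) := by
      intro n
      induction n with
      | zero => intro x; simpa using hD x
      | succ n ih =>
        intro x
        have h1 : v x - u x = g (v (x + c)) - g (u (x + c)) := by
          rw [hvfix x, hufix x]; ring
        rw [h1]
        calc |g (v (x + c)) - g (u (x + c))|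
            ≤ L * |v (x + c) - u (x + c)| := hglip _ _ (hvnn _) (hunn _)
          _ ≤ L * (L ^ n * (Cv + K)) := mul_le_mul_of_nonneg_left (ih (x + c)) hL0
          _ = L ^ (n + 1) * (Cv + K) := by ring
    funext x
    have htend : Tendsto (fun n : ℕ => L ^ n * (Cv + K)) atTop (𝓝 0) := by
      simpa using (tendsto_pow_atTop_nhds_zero_of_lt_one hL0 hL1).mul_const (Cv + K)
    have : |v x - u x| ≤ 0 := by
      apply le_of_tendsto_of_tendsto tendsto_const_nhds htend
      filter_upwards with n using hiter n x
    have h0 := abs_nonneg (v x - u x)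
    have : |v x - u x| = 0 := le_antisymm this h0
    have := abs_eq_zero.mp this
    linarith
  · -- continuity
    intro hw
    have hseqc : ∀ n, Continuous (seq n) := by
      intro n
      induction n with
      | zero => exact continuous_const
      | succ n ih =>
        have hshift : Continuous (fun x => seq n (x + c)) := ih.comp (continuous_add_right c)
        have heq : (fun x => seq (n + 1) x) = fun x =>
            s * (1 - pA) * seq n (x + c) +
              (1 - pJ) * (k * r * M * seq n (x + c) / (M + (r - 1) * seq n (x + c))) + w x := by
          funext x
          rw [hseqS, hgdef]
          simp only [hF]
        rw [show seq (n + 1) = fun x => seq (n + 1) x from rfl, heq]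
        apply Continuous.add _ hw
        apply Continuous.add
        · exact continuous_const.mul hshift
        · apply continuous_const.mul
          apply Continuous.div (continuous_const.mul hshift)
            (continuous_const.add (continuous_const.mul hshift))
          intro x
          exact ne_of_gt (hden _ (hseqnn n (x + c)))
    have hunif : TendstoUniformly (fun n x => seq n x) u atTop := by
      rw [Metric.tendstoUniformly_iff]
      intro ε hε
      have htend : Tendsto (fun n : ℕ => C * L ^ n / (1 - L)) atTop (𝓝 0) := by
        have h1 : Tendsto (fun n : ℕ => L ^ n) atTop (𝓝 0) :=
          tendsto_pow_atTop_nhds_zero_of_lt_one hL0 hL1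
        have := (h1.const_mul C).div_const (1 - L)
        simpa using this
      have := (htend.eventually (eventually_lt_nhds hε))
      filter_upwards [this] with n hn x
      calc dist (u x) (seq n x) = dist (seq n x) (u x) := dist_comm _ _
        _ ≤ C * L ^ n / (1 - L) := hudist n x
        _ < ε := hn
    exact hunif.continuous (Eventually.of_forall hseqc).frequently
end
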